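/- For any N points z_1,…,z_N on S^d with d ≥ 2, the discrete energy (1/N²)·∑_{i,j=1}^N arccos|z_i·z_j| is at most π/2 − 69/(50(d+1)). -/

import Mathlib

open Real RealInnerProductSpace

-- helper: nonneg from deriv
lemma nonneg_of_deriv (f f' : ℝ → ℝ) (hf : ∀ t, HasDerivAt f (f' t) t) (h0 : f 0 = 0)
    (hf' : ∀ t, 0 ≤ t → 0 ≤ f' t) : ∀ x, 0 ≤ x → 0 ≤ f x := by
  intro x hx
  have hm : MonotoneOn f (Set.Ici 0) := by
    apply monotoneOn_of_deriv_nonneg (convex_Ici 0)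
    · exact fun t _ => (hf t).differentiableAt.continuousAt.continuousWithinAt
    · exact fun t _ => (hf t).differentiableAt.differentiableWithinAt
    · intro t ht
      rw [interior_Ici] at ht
      rw [(hf t).deriv]
      exact hf' t ht.le
  have := hm Set.self_mem_Ici hx hx
  linarith [h0 ▸ this]

lemma sin_ge_cubic {x : ℝ} (hx : 0 ≤ x) : x - x ^ 3 / 6 ≤ sin x := by
  have := nonneg_of_deriv (fun t => sin t - (t - t ^ 3 / 6))
      (fun t => cos t - (1 - t ^ 2 / 2))
      (fun t => by
        have h1 : HasDerivAt (fun t : ℝ => t ^ 3) (3 * t ^ 2) t := by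
          simpa using hasDerivAt_pow 3 t
        have := (Real.hasDerivAt_sin t).sub ((hasDerivAt_id t).sub (h1.div_const 6))
        exact this.congr_deriv (by ring))
      (by norm_num)
      (fun t _ => by nlinarith [one_sub_sq_div_two_le_cos (x := t)])
  linarith [this x hx]

lemma cos_le_quartic {x : ℝ} (hx : 0 ≤ x) : cos x ≤ 1 - x ^ 2 / 2 + x ^ 4 / 24 := by
  have := nonneg_of_deriv (fun t => 1 - t ^ 2 / 2 + t ^ 4 / 24 - cos t)
      (fun t => -t + t ^ 3 / 6 + sin t)
      (fun t => by
        have h2 : HasDerivAt (fun t : ℝ => t ^ 2) (2 * t) t := by simpa using hasDerivAt_pow 2 t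
        have h4 : HasDerivAt (fun t : ℝ => t ^ 4) (4 * t ^ 3) t := by simpa using hasDerivAt_pow 4 t
        have := (((hasDerivAt_const t (1:ℝ)).sub (h2.div_const 2)).add (h4.div_const 24)).sub
          (Real.hasDerivAt_cos t)
        exact this.congr_deriv (by ring))
      (by norm_num)
      (fun t ht => by nlinarith [sin_ge_cubic ht])
  linarith [this x hx]

lemma sin_le_quintic {x : ℝ} (hx : 0 ≤ x) : sin x ≤ x - x ^ 3 / 6 + x ^ 5 / 120 := by
  have := nonneg_of_deriv (fun t => t - t ^ 3 / 6 + t ^ 5 / 120 - sin t)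
      (fun t => 1 - t ^ 2 / 2 + t ^ 4 / 24 - cos t)
      (fun t => by
        have h3 : HasDerivAt (fun t : ℝ => t ^ 3) (3 * t ^ 2) t := by simpa using hasDerivAt_pow 3 t
        have h5 : HasDerivAt (fun t : ℝ => t ^ 5) (5 * t ^ 4) t := by simpa using hasDerivAt_pow 5 t
        have := (((hasDerivAt_id t).sub (h3.div_const 6)).add (h5.div_const 120)).sub
          (Real.hasDerivAt_sin t)
        exact this.congr_deriv (by ring))
      (by norm_num)
      (fun t ht => by nlinarith [cos_le_quartic ht])
  linarith [this x hx]

lemma poly_ineq {x : ℝ} (h0 : 0 ≤ x) (h1 : x ≤ 1.5707965) :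
    (19/69) * x - x ^ 3 / 6 + x ^ 5 / 120 ≤ 47699/345000 := by
  nlinarith [sq_nonneg (x - 0.7607), sq_nonneg (x^2 - 0.5787), mul_nonneg h0 (sq_nonneg (x - 0.7607)), mul_nonneg (sub_nonneg.2 h1) (sq_nonneg (x - 0.7607)), mul_nonneg (sub_nonneg.2 h1) (sq_nonneg (x^2 - 0.5787)), sq_nonneg (x^2 + x - 1.34), mul_nonneg h0 h0]

lemma one_sub_cos_le {φ : ℝ} (h0 : 0 ≤ φ) (h1 : φ ≤ π) : 1 - cos φ ≤ (50/69) * φ := by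
  rcases le_or_gt φ (100/69) with hc | hc
  · nlinarith [one_sub_sq_div_two_le_cos (x := φ)]
  rcases le_or_gt φ (π/2) with hc2 | hc2
  · have : 0 ≤ cos φ := cos_nonneg_of_mem_Icc ⟨by linarith, hc2⟩
    nlinarith
  · set ξ := φ - π/2 with hξ
    have hξ0 : 0 ≤ ξ := by simp [hξ]; linarith
    have hξ1 : ξ ≤ 1.5707965 := by
      have := pi_lt_d6
      simp only [hξ]; linarith
    have hcos : cos φ = -sin ξ := by
      have : φ = ξ + π/2 := by ring
      rw [this, cos_add_pi_div_two]
    rw [hcos]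
    have hq := sin_le_quintic hξ0
    have hp := poly_ineq hξ0 hξ1
    have hπ := pi_gt_d6
    have : (50/69) * φ = (50/69) * ξ + (25/69) * π := by rw [hξ]; ring
    rw [this]
    nlinarith

lemma sin_sq_le {β : ℝ} (h0 : 0 ≤ β) (h1 : β ≤ π/2) : (69/50) * sin β ^ 2 ≤ β := by
  have h := one_sub_cos_le (φ := 2*β) (by linarith) (by linarith)
  have hs : sin β ^ 2 = 1/2 - cos (2*β)/2 := sin_sq_eq_half_sub β
  nlinarith

lemma arccos_abs_le {t : ℝ} (ht : |t| ≤ 1) : Real.arccos |t| ≤ π/2 - (69/50) * t^2 := by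
  have h0 : 0 ≤ |t| := abs_nonneg t
  have h1 : -1 ≤ |t| := by linarith
  have hβ0 : 0 ≤ arcsin |t| := arcsin_nonneg.2 h0
  have hβ1 : arcsin |t| ≤ π/2 := arcsin_le_pi_div_two _
  have hsin : sin (arcsin |t|) = |t| := sin_arcsin h1 ht
  have := sin_sq_le hβ0 hβ1
  rw [hsin] at this
  rw [Real.arccos]
  have : (69/50) * t^2 ≤ arcsin |t| := by
    have ha : |t|^2 = t^2 := sq_abs t
    rw [ha] at this; linarith
  linarith

lemma sum_swap4 {n m : ℕ} (F : Fin n → Fin n → Fin m → Fin m → ℝ) :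
    ∑ k, ∑ l, ∑ i, ∑ j, F k l i j = ∑ i, ∑ j, ∑ k, ∑ l, F k l i j :=
  calc ∑ k, ∑ l, ∑ i, ∑ j, F k l i j
      = ∑ k, ∑ i, ∑ l, ∑ j, F k l i j :=
        Finset.sum_congr rfl fun k _ => Finset.sum_comm
    _ = ∑ k, ∑ i, ∑ j, ∑ l, F k l i j :=
        Finset.sum_congr rfl fun k _ => Finset.sum_congr rfl fun i _ => Finset.sum_comm
    _ = ∑ i, ∑ k, ∑ j, ∑ l, F k l i j := Finset.sum_comm
    _ = ∑ i, ∑ j, ∑ k, ∑ l, F k l i j :=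
        Finset.sum_congr rfl fun i _ => Finset.sum_comm

lemma frame_bound (d N : ℕ) (z : Fin N → EuclideanSpace ℝ (Fin (d + 1)))
    (hz : ∀ i, ‖z i‖ = 1) :
    (N : ℝ) ^ 2 / (d + 1) ≤ ∑ i, ∑ j, ⟪z i, z j⟫ ^ 2 := by
  have hinner : ∀ i j, ⟪z i, z j⟫ = ∑ k, z i k * z j k := by
    intro i j
    simp [PiLp.inner_apply, RCLike.inner_apply, conj_trivial]
    exact Finset.sum_congr rfl fun k _ => mul_comm _ _
  set M : Fin (d+1) → Fin (d+1) → ℝ := fun k l => ∑ i, z i k * z i l with hM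
  have hnorm : ∀ i, ∑ k, z i k * z i k = 1 := by
    intro i
    have : ⟪z i, z i⟫ = 1 := by
      rw [real_inner_self_eq_norm_sq, hz i]; norm_num
    rw [hinner i i] at this; exact this
  have htr : ∑ k, M k k = N := by
    rw [hM, Finset.sum_comm]
    simp [hnorm]
  have hCS : (N:ℝ)^2 ≤ (d+1) * ∑ k, (M k k)^2 := by
    have := Finset.sum_mul_sq_le_sq_mul_sq Finset.univ (fun k => M k k) (fun _ => (1:ℝ))
    simp only [mul_one, one_pow, Finset.sum_const, Finset.card_univ, Fintype.card_fin,
      nsmul_eq_mul] at this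
    rw [htr] at this
    push_cast at this ⊢
    linarith
  have hdiag : ∑ k, (M k k)^2 ≤ ∑ k, ∑ l, (M k l)^2 :=
    Finset.sum_le_sum fun k _ =>
      Finset.single_le_sum (f := fun l => (M k l)^2) (fun l _ => sq_nonneg _) (Finset.mem_univ k)
  have hident : ∑ k, ∑ l, (M k l)^2 = ∑ i, ∑ j, ⟪z i, z j⟫ ^ 2 := by
    have e1 : ∀ k l, (M k l)^2 = ∑ i, ∑ j, (z i k * z i l) * (z j k * z j l) := by
      intro k l; rw [hM, sq, Finset.sum_mul_sum]
    have e2 : ∀ i j : Fin N, ⟪z i, z j⟫ ^ 2 = ∑ k, ∑ l, (z i k * z i l) * (z j k * z j l) := by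
      intro i j
      rw [hinner, sq, Finset.sum_mul_sum]
      exact Finset.sum_congr rfl fun k _ => Finset.sum_congr rfl fun l _ => by ring
    simp_rw [e1, e2]
    exact sum_swap4 _
  have hpos : (0:ℝ) < (d:ℝ) + 1 := by positivity
  rw [div_le_iff₀ hpos]
  calc (N:ℝ)^2 ≤ (d+1) * ∑ k, (M k k)^2 := hCS
    _ ≤ (d+1) * ∑ k, ∑ l, (M k l)^2 := mul_le_mul_of_nonneg_left hdiag (by positivity)
    _ = (∑ i, ∑ j, ⟪z i, z j⟫ ^ 2) * (d+1) := by rw [hident]; ring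

theorem stmt_3 (d N : ℕ) (hd : 2 ≤ d) (hN : 0 < N)
    (z : Fin N → EuclideanSpace ℝ (Fin (d + 1))) (hz : ∀ i, ‖z i‖ = 1) :
    (1 / (N : ℝ) ^ 2) * ∑ i, ∑ j, Real.arccos |⟪z i, z j⟫| ≤
      Real.pi / 2 - 69 / (50 * (d + 1)) := by
  have habs : ∀ i j, |⟪z i, z j⟫| ≤ 1 := by
    intro i j
    calc |⟪z i, z j⟫| ≤ ‖z i‖ * ‖z j‖ := abs_real_inner_le_norm _ _
      _ = 1 := by rw [hz i, hz j, one_mul]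
  have hstep : ∑ i, ∑ j, Real.arccos |⟪z i, z j⟫| ≤
      ∑ i, ∑ j, (Real.pi/2 - (69/50) * ⟪z i, z j⟫^2) := by
    apply Finset.sum_le_sum; intro i _
    apply Finset.sum_le_sum; intro j _
    exact arccos_abs_le (habs i j)
  have hsplit : ∑ i, ∑ j, (Real.pi/2 - (69/50) * ⟪z i, z j⟫^2)
      = (N:ℝ)^2 * (Real.pi/2) - (69/50) * ∑ i, ∑ j, ⟪z i, z j⟫^2 := by
    simp only [Finset.sum_sub_distrib, Finset.sum_const, Finset.card_univ,
      Fintype.card_fin, nsmul_eq_mul, ← Finset.mul_sum]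
    ring
  have hframe := frame_bound d N z hz
  have hN2 : (0:ℝ) < (N:ℝ)^2 := by positivity
  have hd1 : (0:ℝ) < (d:ℝ) + 1 := by positivity
  have hfinal : ∑ i, ∑ j, Real.arccos |⟪z i, z j⟫| ≤
      (N:ℝ)^2 * (Real.pi/2) - (69/50) * ((N:ℝ)^2 / (d+1)) := by
    rw [hsplit] at hstep
    nlinarith
  rw [one_div, inv_mul_le_iff₀ hN2]
  push_cast
  calc ∑ i, ∑ j, Real.arccos |⟪z i, z j⟫|
      ≤ (N:ℝ)^2 * (Real.pi/2) - (69/50) * ((N:ℝ)^2 / (d+1)) := hfinal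
    _ = (N:ℝ)^2 * (Real.pi / 2 - 69 / (50 * ((d:ℝ) + 1))) := by
        field_simp
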